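/- arXiv:2208.03751 — 2 statements merged into one kernel-verified Lean document; each statement's English description precedes it below -/
import Mathlib

section
/- Let R be a reduced commutative ring such that its essential annihilating-ideal graph EG(R) is complete bipartite with both parts infinite (i.e., EG(R) = K_{∞,∞}, in particular triangle-free with no isolated structure forcing a 3-cycle). Then R has exactly two minimal prime ideals. -/
/-- An ideal is essential if it intersects every nonzero ideal nontrivially. -/
def IsEssentialIdeal (R : Type*) [CommRing R] (E : Ideal R) : Prop :=
  ∀ J : Ideal R, J ≠ ⊥ → E ⊓ J ≠ ⊥

/-- Vertices of the essential annihilating-ideal graph: nonzero ideals with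
nonzero annihilator. -/
def AnnVertex (R : Type*) [CommRing R] : Type _ :=
  {I : Ideal R // I ≠ ⊥ ∧ Submodule.annihilator I ≠ ⊥}

/-- The essential annihilating-ideal graph `EG(R)`. -/
def EG (R : Type*) [CommRing R] : SimpleGraph (AnnVertex R) where
  Adj I J := I ≠ J ∧ IsEssentialIdeal R (Submodule.annihilator (I.1 * J.1))
  symm := by
    constructor
    intro I J h
    refine ⟨h.1.symm, ?_⟩
    rw [mul_comm]
    exact h.2
  loopless := by constructor; intro I h; exact h.1 rfl

section Aux

variable {R : Type*} [CommRing R]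

lemma red_eq_zero [IsReduced R] {x : R} (h : x * x = 0) : x = 0 :=
  IsNilpotent.eq_zero ⟨2, by rwa [pow_two]⟩

lemma mem_ann_span_singleton (a b : R) :
    b ∈ Submodule.annihilator (Ideal.span {a}) ↔ b * a = 0 := by
  have h : b ∈ (Submodule.span R {a}).annihilator ↔ b • a = 0 :=
    Submodule.mem_annihilator_span_singleton a b
  rw [smul_eq_mul] at h
  exact h

lemma mem_annihilator_iff_le (I : Ideal R) (a : R) :
    a ∈ Submodule.annihilator I ↔ I ≤ Submodule.annihilator (Ideal.span {a}) := by
  constructor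
  · intro h y hy
    rw [mem_ann_span_singleton, mul_comm]
    have := Submodule.mem_annihilator.mp h y hy
    simpa [smul_eq_mul] using this
  · intro h
    rw [Submodule.mem_annihilator]
    intro b hb
    have := (mem_ann_span_singleton a b).mp (h hb)
    rw [smul_eq_mul, mul_comm]
    exact this

lemma ann_inf_self [IsReduced R] (I : Ideal R) : Submodule.annihilator I ⊓ I = ⊥ := by
  rw [eq_bot_iff]
  intro x hx
  rw [Submodule.mem_inf] at hx
  obtain ⟨hx1, hx2⟩ := hx
  have hxx : x * x = 0 := by
    have := Submodule.mem_annihilator.mp hx1 x hx2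
    simpa [smul_eq_mul] using this
  exact (Submodule.mem_bot R).mpr (red_eq_zero hxx)

lemma EG_adj_iff [IsReduced R] (I J : AnnVertex R) :
    (EG R).Adj I J ↔ I ≠ J ∧ I.1 * J.1 = ⊥ := by
  constructor
  · rintro ⟨hne, hess⟩
    refine ⟨hne, ?_⟩
    by_contra h0
    exact hess _ h0 (ann_inf_self _)
  · rintro ⟨hne, h0⟩
    refine ⟨hne, ?_⟩
    rw [h0, Submodule.annihilator_bot]
    intro K hK
    rw [top_inf_eq]
    exact hK

lemma mul_self_ne_bot [IsReduced R] {I : Ideal R} (h : I ≠ ⊥) : I * I ≠ ⊥ := by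
  intro h0
  obtain ⟨x, hx, hx0⟩ := Submodule.ne_bot_iff _ |>.mp h
  have : x * x ∈ (⊥ : Ideal R) := h0 ▸ Ideal.mul_mem_mul hx hx
  exact hx0 (red_eq_zero ((Submodule.mem_bot R).mp this))

lemma le_ann_of (V₁ V₂ : Set (AnnVertex R))
    (hmul0 : ∀ I ∈ V₁, ∀ J ∈ V₂, I.1 * J.1 = ⊥) :
    (⨆ J ∈ V₂, J.1) ≤ Submodule.annihilator (⨆ I ∈ V₁, I.1) := by
  refine iSup₂_le fun J hJ => ?_
  intro t ht
  rw [mem_annihilator_iff_le]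
  refine iSup₂_le fun I hI => ?_
  intro a ha
  rw [mem_ann_span_singleton]
  have : a * t ∈ (⊥ : Ideal R) := hmul0 I hI J hJ ▸ Ideal.mul_mem_mul ha ht
  exact (Submodule.mem_bot R).mp this

lemma ann_isPrime [IsReduced R] (V₁ V₂ : Set (AnnVertex R))
    (hadj : ∀ I J : AnnVertex R,
      (EG R).Adj I J ↔ ((I ∈ V₁ ∧ J ∈ V₂) ∨ (I ∈ V₂ ∧ J ∈ V₁)))
    (hAbot : (⨆ I ∈ V₁, I.1) ≠ ⊥)
    (hBA : (⨆ J ∈ V₂, J.1) ≤ Submodule.annihilator (⨆ I ∈ V₁, I.1)) :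
    (Submodule.annihilator (⨆ I ∈ V₁, I.1)).IsPrime := by
  set A := ⨆ I ∈ V₁, (I : AnnVertex R).1 with hAdef
  constructor
  · intro htop
    apply hAbot
    rw [eq_bot_iff]
    intro a ha
    have h1 : (1 : R) ∈ Submodule.annihilator A := htop ▸ Submodule.mem_top
    have := Submodule.mem_annihilator.mp h1 a ha
    simpa [Submodule.mem_bot] using this
  · intro x y hxy
    by_contra hcon
    push_neg at hcon
    obtain ⟨hx, hy⟩ := hcon
    -- nonzero ideals X = (x)A, Y = (y)A
    have hne_of_not_mem : ∀ z : R, z ∉ Submodule.annihilator A →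
        Ideal.span {z} * A ≠ ⊥ := by
      intro z hz
      rw [Submodule.ne_bot_iff]
      rw [Submodule.mem_annihilator] at hz
      push_neg at hz
      obtain ⟨a, ha, hza⟩ := hz
      refine ⟨z * a, Ideal.mul_mem_mul (Ideal.mem_span_singleton_self z) ha, ?_⟩
      rwa [smul_eq_mul] at hza
    set X := Ideal.span {x} * A with hXdef
    set Y := Ideal.span {y} * A with hYdef
    have hXbot : X ≠ ⊥ := hne_of_not_mem x hx
    have hYbot : Y ≠ ⊥ := hne_of_not_mem y hy
    have hXY : X * Y = ⊥ := by
      have h1 : X * Y = Ideal.span {x} * Ideal.span {y} * (A * A) := by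
        rw [hXdef, hYdef]; ring
      rw [h1, Ideal.span_singleton_mul_span_singleton, eq_bot_iff]
      refine Ideal.mul_le.mpr fun m hm n hn => ?_
      obtain ⟨c, rfl⟩ := Ideal.mem_span_singleton'.mp hm
      have hnA : n ∈ A := Ideal.mul_le_left hn
      have h2 : (x * y) * n = 0 := by
        have := Submodule.mem_annihilator.mp hxy n hnA
        rwa [smul_eq_mul] at this
      have : c * (x * y) * n = 0 := by rw [mul_assoc, h2, mul_zero]
      exact (Submodule.mem_bot R).mpr this
    have hann : ∀ U V : Ideal R, U * V = ⊥ → V ≤ Submodule.annihilator U := by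
      intro U V h t ht
      rw [Submodule.mem_annihilator]
      intro b hb
      have : b * t ∈ U * V := Ideal.mul_mem_mul hb ht
      rw [h] at this
      have hbt : b * t = 0 := (Submodule.mem_bot R).mp this
      rw [smul_eq_mul, mul_comm]
      exact hbt
    have hYX : Y ≤ Submodule.annihilator X := hann X Y hXY
    have hXY' : X ≤ Submodule.annihilator Y := hann Y X (by rwa [mul_comm] at hXY)
    have hXAnn : Submodule.annihilator X ≠ ⊥ := fun h => hYbot (le_bot_iff.mp (h ▸ hYX))
    have hYAnn : Submodule.annihilator Y ≠ ⊥ := fun h => hXbot (le_bot_iff.mp (h ▸ hXY'))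
    set vX : AnnVertex R := ⟨X, hXbot, hXAnn⟩ with hvX
    set vY : AnnVertex R := ⟨Y, hYbot, hYAnn⟩ with hvY
    have hvne : vX ≠ vY := by
      intro h
      have hXeqY : X = Y := congrArg (fun v : AnnVertex R => v.1) h
      rw [← hXeqY] at hXY
      exact mul_self_ne_bot hXbot hXY
    have hadjXY : (EG R).Adj vX vY := (EG_adj_iff vX vY).mpr ⟨hvne, hXY⟩
    rcases (hadj vX vY).mp hadjXY with ⟨_, hY2⟩ | ⟨hX2, _⟩
    · -- vY ∈ V₂ : Y ≤ B ≤ Ann A, contradict hy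
      have hYA : Y ≤ Submodule.annihilator A :=
        le_trans (le_biSup (fun J : AnnVertex R => J.1) hY2) hBA
      apply hy
      rw [Submodule.mem_annihilator]
      intro a ha
      have h1 : y * a ∈ Y := Ideal.mul_mem_mul (Ideal.mem_span_singleton_self y) ha
      have h2 : (y * a) * a = 0 := by
        have := Submodule.mem_annihilator.mp (hYA h1) a ha
        rwa [smul_eq_mul] at this
      have h3 : (y * a) * (y * a) = 0 := by
        calc (y * a) * (y * a) = y * ((y * a) * a) := by ring
        _ = 0 := by rw [h2, mul_zero]
      rw [smul_eq_mul]
      exact red_eq_zero h3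
    · -- vX ∈ V₂ : X ≤ Ann A, contradict hx
      have hXA : X ≤ Submodule.annihilator A :=
        le_trans (le_biSup (fun J : AnnVertex R => J.1) hX2) hBA
      apply hx
      rw [Submodule.mem_annihilator]
      intro a ha
      have h1 : x * a ∈ X := Ideal.mul_mem_mul (Ideal.mem_span_singleton_self x) ha
      have h2 : (x * a) * a = 0 := by
        have := Submodule.mem_annihilator.mp (hXA h1) a ha
        rwa [smul_eq_mul] at this
      have h3 : (x * a) * (x * a) = 0 := by
        calc (x * a) * (x * a) = x * ((x * a) * a) := by ring
        _ = 0 := by rw [h2, mul_zero]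
      rw [smul_eq_mul]
      exact red_eq_zero h3

end Aux


theorem two_minimalPrimes_of_complete_bipartite_infinite {R : Type*} [CommRing R]
    [IsReduced R] (V₁ V₂ : Set (AnnVertex R)) (hu : V₁ ∪ V₂ = Set.univ)
    (hd : Disjoint V₁ V₂) (h₁ : V₁.Infinite) (h₂ : V₂.Infinite)
    (hadj : ∀ I J : AnnVertex R,
      (EG R).Adj I J ↔ ((I ∈ V₁ ∧ J ∈ V₂) ∨ (I ∈ V₂ ∧ J ∈ V₁))) :
    ∃ p q : Ideal R, p ≠ q ∧ minimalPrimes R = {p, q} := by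
  obtain ⟨I₀, hI₀⟩ := h₁.nonempty
  obtain ⟨J₀, hJ₀⟩ := h₂.nonempty
  have hmul0 : ∀ I ∈ V₁, ∀ J ∈ V₂, (I : AnnVertex R).1 * J.1 = ⊥ := by
    intro I hI J hJ
    have hne : I ≠ J := fun h => Set.disjoint_left.mp hd hI (h ▸ hJ)
    exact ((EG_adj_iff I J).mp ((hadj I J).mpr (Or.inl ⟨hI, hJ⟩))).2
  have hmul0' : ∀ J ∈ V₂, ∀ I ∈ V₁, (J : AnnVertex R).1 * I.1 = ⊥ := by
    intro J hJ I hI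
    rw [mul_comm]
    exact hmul0 I hI J hJ
  have hadj' : ∀ I J : AnnVertex R,
      (EG R).Adj I J ↔ ((I ∈ V₂ ∧ J ∈ V₁) ∨ (I ∈ V₁ ∧ J ∈ V₂)) :=
    fun I J => (hadj I J).trans or_comm
  have hAbot : (⨆ I ∈ V₁, (I : AnnVertex R).1) ≠ ⊥ := by
    intro h
    have h2 : I₀.1 ≤ ⨆ I ∈ V₁, (I : AnnVertex R).1 :=
      le_biSup (fun I : AnnVertex R => I.1) hI₀
    rw [h] at h2
    exact I₀.2.1 (le_bot_iff.mp h2)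
  have hBbot : (⨆ J ∈ V₂, (J : AnnVertex R).1) ≠ ⊥ := by
    intro h
    have h2 : J₀.1 ≤ ⨆ J ∈ V₂, (J : AnnVertex R).1 :=
      le_biSup (fun I : AnnVertex R => I.1) hJ₀
    rw [h] at h2
    exact J₀.2.1 (le_bot_iff.mp h2)
  have hBA := le_ann_of V₁ V₂ hmul0
  have hAB := le_ann_of V₂ V₁ hmul0'
  set A := ⨆ I ∈ V₁, (I : AnnVertex R).1 with hAdef
  set B := ⨆ J ∈ V₂, (J : AnnVertex R).1 with hBdef
  have hp : (Submodule.annihilator A).IsPrime := ann_isPrime V₁ V₂ hadj hAbot hBA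
  have hq : (Submodule.annihilator B).IsPrime := ann_isPrime V₂ V₁ hadj' hBbot hAB
  have hinf : Submodule.annihilator A ⊓ Submodule.annihilator B = ⊥ := by
    rw [eq_bot_iff]
    intro z hz
    rw [Submodule.mem_inf] at hz
    obtain ⟨hz1, hz2⟩ := hz
    rw [Submodule.mem_bot]
    by_contra hz0
    have hK1 : Ideal.span {z} ≠ ⊥ := by
      rw [Ne, Ideal.span_singleton_eq_bot]
      exact hz0
    have hKA : A ≤ Submodule.annihilator (Ideal.span {z}) :=
      (mem_annihilator_iff_le _ _).mp hz1
    have hK2 : Submodule.annihilator (Ideal.span {z}) ≠ ⊥ :=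
      fun h => hAbot (le_bot_iff.mp (h ▸ hKA))
    have hv : (⟨Ideal.span {z}, hK1, hK2⟩ : AnnVertex R) ∈ V₁ ∪ V₂ :=
      hu ▸ Set.mem_univ _
    have hzz : z * z ≠ 0 := fun h => hz0 (red_eq_zero h)
    cases hv with
    | inl h =>
      have hzA : z ∈ A :=
        le_biSup (fun I : AnnVertex R => I.1) h (Ideal.mem_span_singleton_self z)
      have := Submodule.mem_annihilator.mp hz1 z hzA
      rw [smul_eq_mul] at this
      exact hzz this
    | inr h =>
      have hzB : z ∈ B :=
        le_biSup (fun I : AnnVertex R => I.1) h (Ideal.mem_span_singleton_self z)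
      have := Submodule.mem_annihilator.mp hz2 z hzB
      rw [smul_eq_mul] at this
      exact hzz this
  have hpq_ne : Submodule.annihilator A ≠ Submodule.annihilator B := by
    intro h
    rw [← h, inf_idem] at hinf
    exact hBbot (le_bot_iff.mp (hinf ▸ hBA))
  have hor : ∀ P : Ideal R, P.IsPrime →
      Submodule.annihilator A ≤ P ∨ Submodule.annihilator B ≤ P := by
    intro P hP
    refine hP.mul_le.mp ?_
    calc Submodule.annihilator A * Submodule.annihilator B
        ≤ Submodule.annihilator A ⊓ Submodule.annihilator B := Ideal.mul_le_inf
      _ = ⊥ := hinf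
      _ ≤ P := bot_le
  have hmin₁ : ∀ P : Ideal R, P.IsPrime → P ≤ Submodule.annihilator A →
      Submodule.annihilator A ≤ P := by
    intro P hP hle
    refine (hor P hP).resolve_right fun hq' => ?_
    have : Submodule.annihilator B ≤ ⊥ := hinf ▸ le_inf (hq'.trans hle) le_rfl
    exact hAbot (le_bot_iff.mp (le_trans hAB this))
  have hmin₂ : ∀ P : Ideal R, P.IsPrime → P ≤ Submodule.annihilator B →
      Submodule.annihilator B ≤ P := by
    intro P hP hle
    refine (hor P hP).resolve_left fun hp' => ?_
    have : Submodule.annihilator A ≤ ⊥ := hinf ▸ le_inf le_rfl (hp'.trans hle)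
    exact hBbot (le_bot_iff.mp (le_trans hBA this))
  refine ⟨Submodule.annihilator A, Submodule.annihilator B, hpq_ne, ?_⟩
  ext P
  simp only [minimalPrimes, Ideal.minimalPrimes, Set.mem_setOf_eq, Set.mem_insert_iff,
    Set.mem_singleton_iff]
  constructor
  · rintro ⟨⟨hPp, -⟩, hPmin⟩
    rcases hor P hPp with h | h
    · left
      exact le_antisymm (hPmin ⟨hp, bot_le⟩ h) h
    · right
      exact le_antisymm (hPmin ⟨hq, bot_le⟩ h) h
  · rintro (rfl | rfl)
    · exact ⟨⟨hp, bot_le⟩, fun Q hQ hQle => hmin₁ Q hQ.1 hQle⟩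
    · exact ⟨⟨hq, bot_le⟩, fun Q hQ hQle => hmin₂ Q hQ.1 hQle⟩
end

section
/- Let R be a commutative ring such that EG(R) is a complete bipartite graph K_{m,n}. Then each of m, n is either 1 or infinite. -/
section Aux

variable {R : Type*} [CommRing R]

local notation "Ann" => Submodule.annihilator (R := R) (M := R)

lemma EG_adj (I J : AnnVertex R) :
    (EG R).Adj I J ↔ I ≠ J ∧ IsEssentialIdeal R (Submodule.annihilator (I.1 * J.1)) :=
  Iff.rfl

lemma ess_top : IsEssentialIdeal R ⊤ := by
  intro J hJ
  simpa using hJ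

lemma IsEssentialIdeal.mono {E F : Ideal R} (h : E ≤ F) (hE : IsEssentialIdeal R E) :
    IsEssentialIdeal R F := by
  intro J hJ hF
  exact hE J hJ (le_bot_iff.mp (hF ▸ inf_le_inf_right J h))

lemma IsEssentialIdeal.inf {E F : Ideal R} (hE : IsEssentialIdeal R E)
    (hF : IsEssentialIdeal R F) : IsEssentialIdeal R (E ⊓ F) := by
  intro J hJ h
  exact hF J hJ (hE (F ⊓ J) (hF J hJ) (by rwa [inf_assoc] at h) ).elim
  
lemma le_ann_iff (I J : Ideal R) : I ≤ Ann J ↔ I * J = ⊥ := by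
  rw [eq_bot_iff, Ideal.mul_le]
  constructor
  · intro h r hr s hs
    simpa using (Submodule.mem_annihilator.mp (h hr)) s hs
  · intro h r hr
    rw [Submodule.mem_annihilator]
    intro n hn
    simpa using h r hr n hn

lemma mul_ann_bot (J : Ideal R) : (Ann J) * J = ⊥ := (le_ann_iff _ J).mp le_rfl

end Aux

section Atoms

variable {R : Type*} [CommRing R]

lemma exists_atom (L : Ideal R) (hL : L ≠ ⊥) (F : Set (Ideal R)) (hF : F.Finite)
    (hsub : ∀ W : Ideal R, W ≠ ⊥ → W ≤ L → W ∈ F) :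
    ∃ M : Ideal R, M ≠ ⊥ ∧ M ≤ L ∧ ∀ N ≤ M, N = ⊥ ∨ N = M := by
  set S : Set (Ideal R) := {W | W ≠ ⊥ ∧ W ≤ L} with hS
  have hSfin : S.Finite := hF.subset (fun W hW => hsub W hW.1 hW.2)
  obtain ⟨M, hMS, hmin⟩ := Set.Finite.exists_minimalFor id S hSfin ⟨L, hL, le_rfl⟩
  refine ⟨M, hMS.1, hMS.2, fun N hN => ?_⟩
  by_cases hN0 : N = ⊥
  · exact Or.inl hN0
  · exact Or.inr (le_antisymm hN (hmin (j := N) ⟨hN0, hN.trans hMS.2⟩ hN))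

lemma sq_zero_atom_ess {M : Ideal R} (hatom : ∀ N ≤ M, N = ⊥ ∨ N = M) (hM : M ≠ ⊥)
    (hsq : M * M = ⊥) : IsEssentialIdeal R (Submodule.annihilator M) := by
  intro J hJ h
  rcases hatom (M ⊓ J) inf_le_left with hb | he
  · -- J ≤ Ann M
    have hJle : J ≤ Submodule.annihilator M := by
      rw [le_ann_iff, eq_bot_iff, Ideal.mul_le]
      intro r hr s hs
      have : r * s ∈ M ⊓ J := ⟨Ideal.mul_mem_left _ r hs, Ideal.mul_mem_right _ J hr⟩
      rw [hb] at this
      exact this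
    rw [inf_eq_right.mpr hJle] at h
    exact hJ h
  · -- M ≤ J and M ≤ Ann M
    have hMle : M ≤ Submodule.annihilator M := by
      rw [le_ann_iff]; exact hsq
    have : M ≤ Submodule.annihilator M ⊓ J := le_inf hMle (he ▸ inf_le_right)
    rw [h, le_bot_iff] at this
    exact hM this

lemma atom_mul {M : Ideal R} (hatom : ∀ N ≤ M, N = ⊥ ∨ N = M) (Z : Ideal R) :
    M * Z = ⊥ ∨ M * Z = M := hatom (M * Z) Ideal.mul_le_left

lemma brauer {M : Ideal R} (hatom : ∀ N ≤ M, N = ⊥ ∨ N = M)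
    (hsq : M * M ≠ ⊥) :
    ∃ e : R, e * e = e ∧ e ≠ 0 ∧ M = Ideal.span {e} := by
  -- get a b in M with a*b ≠ 0
  have : ¬ (M * M ≤ ⊥) := fun h => hsq (le_bot_iff.mp h)
  rw [Ideal.mul_le] at this
  push_neg at this
  obtain ⟨a, ha, b, hb, hab⟩ := this
  have ha0 : a ≠ 0 := fun h => hab (by simp [h])
  -- span{a} * M = M
  have hN : Ideal.span {a} * M = M := by
    rcases hatom (Ideal.span {a} * M) Ideal.mul_le_right with h | h
    · exfalso
      apply hab
      have : a * b ∈ Ideal.span {a} * M :=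
        Ideal.mul_mem_mul (Ideal.mem_span_singleton_self a) hb
      rw [h] at this; exact this
    · exact h
  -- a = a * c for some c ∈ M
  have haM : a ∈ Ideal.span {a} * M := hN.symm ▸ ha
  obtain ⟨c, hc, hac⟩ := Ideal.mem_span_singleton_mul.mp haM
  -- T := M ⊓ Ann(span a) = ⊥
  have hT : M ⊓ Submodule.annihilator (Ideal.span {a}) = ⊥ := by
    rcases hatom (M ⊓ Submodule.annihilator (Ideal.span {a})) inf_le_left with h | h
    · exact h
    · exfalso
      have hcT : c ∈ Submodule.annihilator (Ideal.span {a}) := by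
        have : M ≤ Submodule.annihilator (Ideal.span {a}) := by
          conv_lhs => rw [← h]
          exact inf_le_right
        exact this hc
      have := Submodule.mem_annihilator.mp hcT a (Ideal.mem_span_singleton_self a)
      rw [smul_eq_mul, mul_comm] at this
      rw [this] at hac
      exact ha0 hac.symm
  -- c - c*c ∈ T
  have hcc : c - c * c ∈ M ⊓ Submodule.annihilator (Ideal.span {a}) := by
    refine ⟨sub_mem hc (Ideal.mul_mem_left _ c hc), Submodule.mem_annihilator.mpr ?_⟩
    intro n hn
    obtain ⟨r, hr⟩ := Ideal.mem_span_singleton'.mp hn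
    rw [smul_eq_mul, ← hr]
    linear_combination (-(r * c)) * hac
  rw [hT] at hcc
  have hc2 : c * c = c := by
    have : c - c * c = 0 := hcc
    linear_combination -this
  have hc0 : c ≠ 0 := by
    intro h
    rw [h, mul_zero] at hac
    exact ha0 hac.symm
  refine ⟨c, hc2, hc0, ?_⟩
  rcases hatom (Ideal.span {c}) ((Ideal.span_singleton_le_iff_mem M).mpr hc) with h | h
  · exact absurd (Ideal.span_singleton_eq_bot.mp h) hc0
  · exact h.symm

lemma idem_split (e : R) (Z : Ideal R) :
    Z = Ideal.span {e} * Z + Ideal.span {1 - e} * Z := by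
  apply le_antisymm
  · intro z hz
    have : z = e * z + (1 - e) * z := by ring
    rw [this]
    exact Submodule.add_mem_sup
      (Ideal.mul_mem_mul (Ideal.mem_span_singleton_self e) hz)
      (Ideal.mul_mem_mul (Ideal.mem_span_singleton_self (1 - e)) hz)
  · exact sup_le Ideal.mul_le_right Ideal.mul_le_right

end Atoms

section Main

variable {R : Type*} [CommRing R]

lemma AnnVertex.val_eq {v w : AnnVertex R} (h : v = w) : v.1 = w.1 := by rw [h]

lemma AnnVertex.ext' {v w : AnnVertex R} (h : v.1 = w.1) : v = w := Subtype.ext h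

theorem bipartite_aux (V₁ V₂ : Set (AnnVertex R)) (hne₂ : V₂.Nonempty)
    (_hu : V₁ ∪ V₂ = Set.univ) (hd : Disjoint V₁ V₂)
    (hadj : ∀ I J : AnnVertex R,
      (EG R).Adj I J ↔ ((I ∈ V₁ ∧ J ∈ V₂) ∨ (I ∈ V₂ ∧ J ∈ V₁)))
    (hfin : V₁.Finite)
    (A B : AnnVertex R) (hA : A ∈ V₁) (hB : B ∈ V₁) (hAB : A ≠ B) : False := by
  classical
  have hdisj : ∀ v : AnnVertex R, v ∈ V₁ → v ∈ V₂ → False := fun v h1 h2 =>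
    Set.disjoint_left.mp hd h1 h2
  have no_adj₁ : ∀ v w : AnnVertex R, v ∈ V₁ → w ∈ V₁ → v ≠ w →
      ¬ IsEssentialIdeal R (Submodule.annihilator (v.1 * w.1)) := by
    intro v w hv hw hvw hEss
    rcases (hadj v w).mp ⟨hvw, hEss⟩ with ⟨_, h2⟩ | ⟨h2, _⟩
    · exact hdisj w hw h2
    · exact hdisj v hv h2
  have no_adj₂ : ∀ v w : AnnVertex R, v ∈ V₂ → w ∈ V₂ → v ≠ w →
      ¬ IsEssentialIdeal R (Submodule.annihilator (v.1 * w.1)) := by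
    intro v w hv hw hvw hEss
    rcases (hadj v w).mp ⟨hvw, hEss⟩ with ⟨h2, _⟩ | ⟨_, h2⟩
    · exact hdisj v h2 hv
    · exact hdisj w h2 hw
  have cross : ∀ v w : AnnVertex R, v ∈ V₁ → w ∈ V₂ →
      IsEssentialIdeal R (Submodule.annihilator (v.1 * w.1)) :=
    fun v w hv hw => ((hadj v w).mpr (Or.inl ⟨hv, hw⟩)).2
  have V1_of_adj : ∀ v w : AnnVertex R, (EG R).Adj v w → w ∈ V₂ → v ∈ V₁ := by
    intro v w hvw hw
    rcases (hadj v w).mp hvw with ⟨h1, _⟩ | ⟨_, h2⟩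
    · exact h1
    · exact (hdisj w h2 hw).elim
  have V2_of_adj : ∀ v w : AnnVertex R, (EG R).Adj v w → w ∈ V₁ → v ∈ V₂ := by
    intro v w hvw hw
    rcases (hadj v w).mp hvw with ⟨_, h2⟩ | ⟨h1, _⟩
    · exact (hdisj w hw h2).elim
    · exact h1
  obtain ⟨K, hK⟩ := hne₂
  have hNE : ¬ IsEssentialIdeal R (Submodule.annihilator (A.1 * B.1)) :=
    no_adj₁ A B hA hB hAB
  have hABbot : A.1 * B.1 ≠ ⊥ := by
    intro h
    exact hNE (by rw [h, Submodule.annihilator_bot]; exact ess_top)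
  obtain ⟨X, hX0, hXmeet⟩ : ∃ X : Ideal R, X ≠ ⊥ ∧
      Submodule.annihilator (A.1 * B.1) ⊓ X = ⊥ := by
    by_contra hcon
    push_neg at hcon
    exact hNE (fun J hJ => hcon J hJ)
  set E' := (Submodule.annihilator (A.1 * K.1) ⊓ Submodule.annihilator (B.1 * K.1)) ⊓ X
    with hE'def
  have hE'0 : E' ≠ ⊥ :=
    ((cross A K hA hK).inf (cross B K hB hK)) X hX0
  set L := E' * (A.1 * B.1) with hLdef
  have hL0 : L ≠ ⊥ := by
    intro h
    have h1 : E' ≤ Submodule.annihilator (A.1 * B.1) := (le_ann_iff _ _).mpr h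
    have h2 : E' ≤ Submodule.annihilator (A.1 * B.1) ⊓ X := le_inf h1 inf_le_right
    rw [hXmeet, le_bot_iff] at h2
    exact hE'0 h2
  have hLK : L * K.1 = ⊥ := by
    have h1 : E' * (A.1 * K.1) = ⊥ :=
      (le_ann_iff _ _).mp (le_trans inf_le_left inf_le_left)
    have h2 : L * K.1 = (E' * (A.1 * K.1)) * B.1 := by rw [hLdef]; ring
    rw [h2, h1]
    exact le_bot_iff.mp Ideal.mul_le_left
  have hML' : L ≤ A.1 * B.1 := Ideal.mul_le_right
  set F : Set (Ideal R) := (Subtype.val '' V₁) ∪ {K.1} with hFdef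
  have hFfin : F.Finite := (hfin.image _).union (Set.finite_singleton _)
  have classifyL : ∀ W : Ideal R, W ≠ ⊥ → W ≤ L → W ∈ F := by
    intro W hW0 hWL
    have hWK : W * K.1 = ⊥ := by
      have h : W * K.1 ≤ L * K.1 := Ideal.mul_mono_left hWL
      rw [hLK, le_bot_iff] at h; exact h
    have hKW : K.1 ≤ Submodule.annihilator W :=
      (le_ann_iff _ _).mpr (by rw [mul_comm]; exact hWK)
    have hWa : Submodule.annihilator W ≠ ⊥ := fun h => K.2.1 (le_bot_iff.mp (hKW.trans h.le))
    by_cases hWK' : W = K.1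
    · exact Set.mem_union_right _ (Set.mem_singleton_iff.mpr hWK')
    · refine Set.mem_union_left _ ⟨⟨W, hW0, hWa⟩, ?_, rfl⟩
      have hadjK : (EG R).Adj ⟨W, hW0, hWa⟩ K := by
        refine ⟨fun h => hWK' (AnnVertex.val_eq h), ?_⟩
        show IsEssentialIdeal R (Submodule.annihilator (W * K.1))
        rw [hWK, Submodule.annihilator_bot]; exact ess_top
      exact V1_of_adj _ _ hadjK hK
  obtain ⟨M, hM0, hML, hatom⟩ := exists_atom L hL0 F hFfin classifyL
  have hMK : M * K.1 = ⊥ := by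
    have h : M * K.1 ≤ L * K.1 := Ideal.mul_mono_left hML
    rw [hLK, le_bot_iff] at h; exact h
  have hKM : K.1 ≤ Submodule.annihilator M :=
    (le_ann_iff _ _).mpr (by rw [mul_comm]; exact hMK)
  have hMann : Submodule.annihilator M ≠ ⊥ := fun h => K.2.1 (le_bot_iff.mp (hKM.trans h.le))
  set m : AnnVertex R := ⟨M, hM0, hMann⟩ with hmdef
  have sq_atom_not_V1 : ∀ (M' : Ideal R) (h0 : M' ≠ ⊥)
      (ha : Submodule.annihilator M' ≠ ⊥),
      (∀ N ≤ M', N = ⊥ ∨ N = M') → M' * M' = ⊥ →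
      (⟨M', h0, ha⟩ : AnnVertex R) ∈ V₁ → False := by
    intro M' h0 ha hatom' hsq' hmem
    have hEss' : IsEssentialIdeal R (Submodule.annihilator M') :=
      sq_zero_atom_ess hatom' h0 hsq'
    have hadj_all : ∀ C : AnnVertex R, C ∈ V₁ → (⟨M', h0, ha⟩ : AnnVertex R) ≠ C → False := by
      intro C hC hne
      apply no_adj₁ _ C hmem hC hne
      exact hEss'.mono (Submodule.annihilator_mono Ideal.mul_le_left)
    by_cases hmA : (⟨M', h0, ha⟩ : AnnVertex R) = A
    · by_cases hmB : (⟨M', h0, ha⟩ : AnnVertex R) = B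
      · exact hAB (hmA.symm.trans hmB)
      · exact hadj_all B hB hmB
    · exact hadj_all A hA hmA
  by_cases hsq : M * M = ⊥
  · -- CASE I
    rcases classifyL M hM0 hML with hMV1 | hMK'
    · obtain ⟨v, hv, hval⟩ := hMV1
      have hmem : (⟨M, hM0, hMann⟩ : AnnVertex R) ∈ V₁ := by
        rwa [show v = (⟨M, hM0, hMann⟩ : AnnVertex R) from AnnVertex.ext' hval] at hv
      exact sq_atom_not_V1 M hM0 hMann hatom hsq hmem
    · -- I.b : M = K.1
      have hMK'' : M = K.1 := hMK'
      have hK2 : K.1 * K.1 = ⊥ := hMK'' ▸ hsq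
      have hEssK : IsEssentialIdeal R (Submodule.annihilator K.1) :=
        sq_zero_atom_ess (hMK'' ▸ hatom) K.2.1 (hMK'' ▸ hsq)
      have all_V1 : ∀ v : AnnVertex R, v ≠ K → v ∈ V₁ := by
        intro v hv
        have hadjKv : (EG R).Adj K v :=
          ⟨fun h => hv h.symm, hEssK.mono (Submodule.annihilator_mono Ideal.mul_le_left)⟩
        exact V1_of_adj v K hadjKv.symm hK
      have classifyV : ∀ Z : Ideal R, Z ≠ ⊥ → Submodule.annihilator Z ≠ ⊥ →
          ∀ W : Ideal R, W ≠ ⊥ → W ≤ Z → W ∈ F := by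
        intro Z hZ0 hZa W hW0 hWZ
        have hWa : Submodule.annihilator W ≠ ⊥ := fun h =>
          hZa (le_bot_iff.mp ((Submodule.annihilator_mono hWZ).trans h.le))
        by_cases hWK : W = K.1
        · exact Set.mem_union_right _ (Set.mem_singleton_iff.mpr hWK)
        · refine Set.mem_union_left _ ⟨⟨W, hW0, hWa⟩, ?_, rfl⟩
          exact all_V1 _ (fun h => hWK (AnnVertex.val_eq h))
      have atom_eq_K : ∀ M' : Ideal R, M' ≠ ⊥ → Submodule.annihilator M' ≠ ⊥ →
          (∀ N ≤ M', N = ⊥ ∨ N = M') → M' = K.1 := by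
        intro M' h0 ha hatom'
        by_cases hsq' : M' * M' = ⊥
        · by_cases hK' : (⟨M', h0, ha⟩ : AnnVertex R) = K
          · exact AnnVertex.val_eq hK'
          · exact (sq_atom_not_V1 M' h0 ha hatom' hsq' (all_V1 _ hK')).elim
        · exfalso
          obtain ⟨e, he2, he0, hMe⟩ := brauer hatom' hsq'
          have he1 : e ≠ 1 := by
            intro h
            apply ha
            rw [eq_bot_iff]
            intro x hx
            have hx1 := Submodule.mem_annihilator.mp hx 1
              (by rw [hMe, h]; exact Ideal.mem_span_singleton_self 1)
            simpa using hx1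
          have h1e : (1 - e) ∈ Submodule.annihilator M' := by
            rw [Submodule.mem_annihilator]
            intro n hn
            rw [hMe] at hn
            obtain ⟨r, hr⟩ := Ideal.mem_span_singleton'.mp hn
            rw [smul_eq_mul, ← hr]
            linear_combination (-r) * he2
          have hWM : (Submodule.annihilator M') * M' = ⊥ := mul_ann_bot M'
          have hMW : M' ≤ Submodule.annihilator (Submodule.annihilator M') :=
            (le_ann_iff _ _).mpr (by rw [mul_comm]; exact hWM)
          have hWa : Submodule.annihilator (Submodule.annihilator M') ≠ ⊥ :=
            fun h => h0 (le_bot_iff.mp (hMW.trans h.le))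
          set w : AnnVertex R := ⟨Submodule.annihilator M', ha, hWa⟩ with hwdef
          set mv : AnnVertex R := ⟨M', h0, ha⟩ with hmvdef
          have hwm : w ≠ mv := by
            intro h
            have hval : Submodule.annihilator M' = M' := AnnVertex.val_eq h
            exact hsq' ((congrArg (fun I => I * M') hval).symm.trans hWM)
          have hadjwm : (EG R).Adj w mv := by
            refine ⟨hwm, ?_⟩
            show IsEssentialIdeal R (Submodule.annihilator ((Submodule.annihilator M') * M'))
            rw [hWM, Submodule.annihilator_bot]; exact ess_top
          have hmvK : mv ≠ K := by
            intro h
            have hval : M' = K.1 := AnnVertex.val_eq h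
            exact hsq' (by rw [hval]; exact hK2)
          have hmvV1 : mv ∈ V₁ := all_V1 _ hmvK
          have hwV2 : w ∈ V₂ := V2_of_adj w mv hadjwm hmvV1
          have hwK : w = K := by
            by_contra h
            exact hdisj w (all_V1 w h) hwV2
          have hWW : (Submodule.annihilator M') * (Submodule.annihilator M') = ⊥ := by
            have : w.1 = K.1 := AnnVertex.val_eq hwK
            rw [show Submodule.annihilator M' = K.1 from this]
            exact hK2
          have hmem2 : (1 - e) * (1 - e) ∈
              (Submodule.annihilator M') * (Submodule.annihilator M') :=
            Ideal.mul_mem_mul h1e h1e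
          rw [hWW] at hmem2
          have h1e0 : (1 : R) - e = 0 := by
            have h11 : (1 - e) * (1 - e) = 1 - e := by linear_combination he2
            rwa [h11, Ideal.mem_bot] at hmem2
          exact he1 (by linear_combination -h1e0)
      have hAnnAB0 : Submodule.annihilator (A.1 * B.1) ≠ ⊥ := fun h =>
        A.2.2 (le_bot_iff.mp ((Submodule.annihilator_mono Ideal.mul_le_left).trans h.le))
      have hAnnABa :
          Submodule.annihilator (Submodule.annihilator (A.1 * B.1)) ≠ ⊥ := by
        intro h
        apply hABbot
        have hle : A.1 * B.1 ≤ Submodule.annihilator (Submodule.annihilator (A.1 * B.1)) :=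
          (le_ann_iff _ _).mpr (by rw [mul_comm]; exact mul_ann_bot _)
        exact le_bot_iff.mp (hle.trans h.le)
      obtain ⟨M₁, hM₁0, hM₁le, hM₁atom⟩ :=
        exists_atom _ hAnnAB0 F hFfin (classifyV _ hAnnAB0 hAnnABa)
      have hM₁a : Submodule.annihilator M₁ ≠ ⊥ := fun h =>
        hAnnABa (le_bot_iff.mp ((Submodule.annihilator_mono hM₁le).trans h.le))
      have hKle1 : K.1 ≤ Submodule.annihilator (A.1 * B.1) :=
        (atom_eq_K M₁ hM₁0 hM₁a hM₁atom) ▸ hM₁le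
      have hP0 : X * (A.1 * B.1) ≠ ⊥ := by
        intro h
        have h1 : X ≤ Submodule.annihilator (A.1 * B.1) := by
          rw [le_ann_iff]
          rw [mul_comm] at h
          rw [mul_comm]
          exact h
        have h2 : X ≤ Submodule.annihilator (A.1 * B.1) ⊓ X := le_inf h1 le_rfl
        rw [hXmeet, le_bot_iff] at h2
        exact hX0 h2
      have hPA : X * (A.1 * B.1) ≤ A.1 := le_trans Ideal.mul_le_right Ideal.mul_le_left
      have hPann : Submodule.annihilator (X * (A.1 * B.1)) ≠ ⊥ := fun h =>
        A.2.2 (le_bot_iff.mp ((Submodule.annihilator_mono hPA).trans h.le))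
      obtain ⟨M₂, hM₂0, hM₂le, hM₂atom⟩ :=
        exists_atom _ hP0 F hFfin (classifyV _ hP0 hPann)
      have hM₂a : Submodule.annihilator M₂ ≠ ⊥ := fun h =>
        hPann (le_bot_iff.mp ((Submodule.annihilator_mono hM₂le).trans h.le))
      have hKle2 : K.1 ≤ X :=
        (le_of_eq (atom_eq_K M₂ hM₂0 hM₂a hM₂atom).symm).trans
          (hM₂le.trans Ideal.mul_le_left)
      have hfin2 : K.1 ≤ ⊥ := le_trans (le_inf hKle1 hKle2) hXmeet.le
      exact K.2.1 (le_bot_iff.mp hfin2)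
  · -- CASE II : M * M ≠ ⊥
    have hmV1 : m ∈ V₁ := by
      rcases classifyL M hM0 hML with h | h
      · obtain ⟨v, hv, hval⟩ := h
        rwa [show v = m from AnnVertex.ext' hval] at hv
      · exfalso
        apply hsq
        have h' : M = K.1 := h
        rw [h'] at hMK ⊢
        exact hMK
    obtain ⟨e, he2, he0, hMe⟩ := brauer hatom hsq
    have h1e : (1 - e) ∈ Submodule.annihilator M := by
      rw [Submodule.mem_annihilator]
      intro n hn
      rw [hMe] at hn
      obtain ⟨r, hr⟩ := Ideal.mem_span_singleton'.mp hn
      rw [smul_eq_mul, ← hr]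
      linear_combination (-r) * he2
    have key2 : ∀ C D : AnnVertex R, C ∈ V₁ → D ∈ V₁ → C ≠ D → M = C.1 → False := by
      intro C D hC hD hCD hMC
      have hmD : m ≠ D := by
        intro hh
        exact hCD (AnnVertex.ext' (hMC.symm.trans (AnnVertex.val_eq hh)))
      have hmC : m = C := AnnVertex.ext' hMC
      have hMD : M * D.1 = M := by
        rcases atom_mul hatom D.1 with h | h
        · exfalso
          apply no_adj₁ m D hmV1 hD hmD
          show IsEssentialIdeal R (Submodule.annihilator (M * D.1))
          rw [h, Submodule.annihilator_bot]; exact ess_top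
        · exact h
      have hsplit : D.1 = M + Ideal.span {1 - e} * D.1 := by
        have hs := idem_split e D.1
        rw [← hMe] at hs
        rw [hMD] at hs
        exact hs
      have hB₀M : (Ideal.span {1 - e} * D.1) * M = ⊥ := by
        rw [hMe]
        rw [eq_bot_iff, Ideal.mul_le]
        intro r hr s hs
        obtain ⟨z, hz, hzr⟩ := Ideal.mem_span_singleton_mul.mp hr
        obtain ⟨u, hu⟩ := Ideal.mem_span_singleton'.mp hs
        rw [← hzr, ← hu]
        have hz0 : (1 - e) * z * (u * e) = 0 := by linear_combination (-(z * u)) * he2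
        rw [hz0]
        exact Submodule.zero_mem ⊥
      have hB₀0 : Ideal.span {1 - e} * D.1 ≠ ⊥ := by
        intro h
        apply hCD
        apply AnnVertex.ext'
        rw [← hMC, hsplit, h]
        simp
      have hB₀a : Submodule.annihilator (Ideal.span {1 - e} * D.1) ≠ ⊥ := by
        intro h
        apply hM0
        have hle : M ≤ Submodule.annihilator (Ideal.span {1 - e} * D.1) :=
          (le_ann_iff _ _).mpr (by rw [mul_comm]; exact hB₀M)
        exact le_bot_iff.mp (hle.trans h.le)
      set b0 : AnnVertex R := ⟨Ideal.span {1 - e} * D.1, hB₀0, hB₀a⟩ with hb0def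
      have hb0C : b0 ≠ C := by
        intro h
        have hval : Ideal.span {1 - e} * D.1 = M := (AnnVertex.val_eq h).trans hMC.symm
        exact hsq (hval ▸ hB₀M)
      have hadjb0C : (EG R).Adj b0 C := by
        refine ⟨hb0C, ?_⟩
        show IsEssentialIdeal R (Submodule.annihilator ((Ideal.span {1 - e} * D.1) * C.1))
        rw [← hMC, hB₀M, Submodule.annihilator_bot]; exact ess_top
      have hb0V2 : b0 ∈ V₂ := V2_of_adj _ _ hadjb0C hC
      have hWM : (Submodule.annihilator M) * M = ⊥ := mul_ann_bot M
      have hMW : M ≤ Submodule.annihilator (Submodule.annihilator M) :=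
        (le_ann_iff _ _).mpr (by rw [mul_comm]; exact hWM)
      have hWa : Submodule.annihilator (Submodule.annihilator M) ≠ ⊥ :=
        fun h => hM0 (le_bot_iff.mp (hMW.trans h.le))
      set w : AnnVertex R := ⟨Submodule.annihilator M, hMann, hWa⟩ with hwdef
      have hwC : w ≠ C := by
        intro h
        have hval : Submodule.annihilator M = M := (AnnVertex.val_eq h).trans hMC.symm
        exact hsq ((congrArg (fun I => I * M) hval).symm.trans hWM)
      have hadjwC : (EG R).Adj w C := by
        refine ⟨hwC, ?_⟩
        show IsEssentialIdeal R (Submodule.annihilator ((Submodule.annihilator M) * C.1))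
        rw [← hMC, hWM, Submodule.annihilator_bot]; exact ess_top
      have hwV2 : w ∈ V₂ := V2_of_adj _ _ hadjwC hC
      have hb0w : b0 ≠ w := by
        intro h
        have hval : Ideal.span {1 - e} * D.1 = Submodule.annihilator M := AnnVertex.val_eq h
        have he_mem : e ∈ D.1 := by
          have heM : e ∈ M := by rw [hMe]; exact Ideal.mem_span_singleton_self e
          have hMle : M ≤ D.1 := hMD ▸ Ideal.mul_le_right
          exact hMle heM
        have h1e_mem : (1 : R) - e ∈ D.1 := by
          have : (1 : R) - e ∈ Ideal.span {1 - e} * D.1 := hval.symm ▸ h1e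
          exact Ideal.mul_le_right this
        have h1mem : (1 : R) ∈ D.1 := by
          have hsum : e + (1 - e) ∈ D.1 := Ideal.add_mem _ he_mem h1e_mem
          simpa using hsum
        apply D.2.2
        rw [eq_bot_iff]
        intro x hx
        have hx1 := Submodule.mem_annihilator.mp hx 1 h1mem
        simpa using hx1
      have hMW' : M * Submodule.annihilator M = ⊥ := by rw [mul_comm]; exact hWM
      have hEq : D.1 * Submodule.annihilator M =
          (Ideal.span {1 - e} * D.1) * Submodule.annihilator M := by
        conv_lhs => rw [hsplit]
        rw [add_mul, hMW', Submodule.add_eq_sup, bot_sup_eq]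
      have hnE : ¬ IsEssentialIdeal R (Submodule.annihilator
          ((Ideal.span {1 - e} * D.1) * Submodule.annihilator M)) :=
        no_adj₂ b0 w hb0V2 hwV2 hb0w
      apply hnE
      rw [← hEq]
      exact cross D w hD hwV2
    by_cases hmA : m = A
    · exact key2 A B hA hB hAB (AnnVertex.val_eq hmA)
    · by_cases hmB : m = B
      · exact key2 B A hB hA hAB.symm (AnnVertex.val_eq hmB)
      · -- II.a : m ∉ {A, B}
        have hMA : M * A.1 = M := by
          rcases atom_mul hatom A.1 with h | h
          · exfalso
            apply no_adj₁ m A hmV1 hA hmA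
            show IsEssentialIdeal R (Submodule.annihilator (M * A.1))
            rw [h, Submodule.annihilator_bot]; exact ess_top
          · exact h
        have hMB : M * B.1 = M := by
          rcases atom_mul hatom B.1 with h | h
          · exfalso
            apply no_adj₁ m B hmV1 hB hmB
            show IsEssentialIdeal R (Submodule.annihilator (M * B.1))
            rw [h, Submodule.annihilator_bot]; exact ess_top
          · exact h
        have hsplitA : A.1 = M + Ideal.span {1 - e} * A.1 := by
          have hs := idem_split e A.1
          rw [← hMe] at hs
          rw [hMA] at hs
          exact hs
        have hsplitB : B.1 = M + Ideal.span {1 - e} * B.1 := by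
          have hs := idem_split e B.1
          rw [← hMe] at hs
          rw [hMB] at hs
          exact hs
        have hzeroM : ∀ Z : Ideal R, (Ideal.span {1 - e} * Z) * M = ⊥ := by
          intro Z
          rw [hMe]
          rw [eq_bot_iff, Ideal.mul_le]
          intro r hr s hs
          obtain ⟨z, hz, hzr⟩ := Ideal.mem_span_singleton_mul.mp hr
          obtain ⟨u, hu⟩ := Ideal.mem_span_singleton'.mp hs
          rw [← hzr, ← hu]
          have hz0 : (1 - e) * z * (u * e) = 0 := by linear_combination (-(z * u)) * he2
          rw [hz0]
          exact Submodule.zero_mem ⊥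
        have hA₀0 : Ideal.span {1 - e} * A.1 ≠ ⊥ := by
          intro h
          apply hmA
          apply AnnVertex.ext'
          show M = A.1
          rw [hsplitA, h]
          simp
        have hB₀0 : Ideal.span {1 - e} * B.1 ≠ ⊥ := by
          intro h
          apply hmB
          apply AnnVertex.ext'
          show M = B.1
          rw [hsplitB, h]
          simp
        have hA₀a : Submodule.annihilator (Ideal.span {1 - e} * A.1) ≠ ⊥ := by
          intro h
          apply hM0
          have hle : M ≤ Submodule.annihilator (Ideal.span {1 - e} * A.1) :=
            (le_ann_iff _ _).mpr (by rw [mul_comm]; exact hzeroM A.1)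
          exact le_bot_iff.mp (hle.trans h.le)
        have hB₀a : Submodule.annihilator (Ideal.span {1 - e} * B.1) ≠ ⊥ := by
          intro h
          apply hM0
          have hle : M ≤ Submodule.annihilator (Ideal.span {1 - e} * B.1) :=
            (le_ann_iff _ _).mpr (by rw [mul_comm]; exact hzeroM B.1)
          exact le_bot_iff.mp (hle.trans h.le)
        set a0 : AnnVertex R := ⟨Ideal.span {1 - e} * A.1, hA₀0, hA₀a⟩ with ha0def
        set b0 : AnnVertex R := ⟨Ideal.span {1 - e} * B.1, hB₀0, hB₀a⟩ with hb0def
        have ha0m : a0 ≠ m := by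
          intro h
          have hval : Ideal.span {1 - e} * A.1 = M := AnnVertex.val_eq h
          exact hsq (hval ▸ hzeroM A.1)
        have hb0m : b0 ≠ m := by
          intro h
          have hval : Ideal.span {1 - e} * B.1 = M := AnnVertex.val_eq h
          exact hsq (hval ▸ hzeroM B.1)
        have hadja0m : (EG R).Adj a0 m := by
          refine ⟨ha0m, ?_⟩
          show IsEssentialIdeal R (Submodule.annihilator ((Ideal.span {1 - e} * A.1) * M))
          rw [hzeroM A.1, Submodule.annihilator_bot]; exact ess_top
        have hadjb0m : (EG R).Adj b0 m := by
          refine ⟨hb0m, ?_⟩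
          show IsEssentialIdeal R (Submodule.annihilator ((Ideal.span {1 - e} * B.1) * M))
          rw [hzeroM B.1, Submodule.annihilator_bot]; exact ess_top
        have ha0V2 : a0 ∈ V₂ := V2_of_adj _ _ hadja0m hmV1
        have hb0V2 : b0 ∈ V₂ := V2_of_adj _ _ hadjb0m hmV1
        have ha0b0 : a0 ≠ b0 := by
          intro h
          have hval : Ideal.span {1 - e} * A.1 = Ideal.span {1 - e} * B.1 :=
            AnnVertex.val_eq h
          apply hAB
          apply AnnVertex.ext'
          rw [hsplitA, hsplitB, hval]
        have hMB₀ : M * (Ideal.span {1 - e} * B.1) = ⊥ := by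
          rw [mul_comm]; exact hzeroM B.1
        have hEq : A.1 * (Ideal.span {1 - e} * B.1) =
            (Ideal.span {1 - e} * A.1) * (Ideal.span {1 - e} * B.1) := by
          conv_lhs => rw [hsplitA]
          rw [add_mul, hMB₀, Submodule.add_eq_sup, bot_sup_eq]
        have hnE : ¬ IsEssentialIdeal R (Submodule.annihilator
            ((Ideal.span {1 - e} * A.1) * (Ideal.span {1 - e} * B.1))) :=
          no_adj₂ a0 b0 ha0V2 hb0V2 ha0b0
        apply hnE
        rw [← hEq]
        exact cross A b0 hA hb0V2

end Main

theorem parts_one_or_infinite_of_completeBipartite {R : Type*} [CommRing R]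
    (V₁ V₂ : Set (AnnVertex R)) (hne₁ : V₁.Nonempty) (hne₂ : V₂.Nonempty)
    (hu : V₁ ∪ V₂ = Set.univ) (hd : Disjoint V₁ V₂)
    (hadj : ∀ I J : AnnVertex R,
      (EG R).Adj I J ↔ ((I ∈ V₁ ∧ J ∈ V₂) ∨ (I ∈ V₂ ∧ J ∈ V₁))) :
    (V₁.Infinite ∨ ∃ v, V₁ = {v}) ∧ (V₂.Infinite ∨ ∃ v, V₂ = {v}) := by
  constructor
  · by_cases hinf : V₁.Infinite
    · exact Or.inl hinf
    · right
      obtain ⟨A, hA⟩ := hne₁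
      refine ⟨A, ?_⟩
      ext v
      simp only [Set.mem_singleton_iff]
      constructor
      · intro hv
        by_contra hne
        exact bipartite_aux V₁ V₂ hne₂ hu hd hadj (Set.not_infinite.mp hinf) v A hv hA hne
      · intro h; rw [h]; exact hA
  · by_cases hinf : V₂.Infinite
    · exact Or.inl hinf
    · right
      obtain ⟨A, hA⟩ := hne₂
      refine ⟨A, ?_⟩
      ext v
      simp only [Set.mem_singleton_iff]
      constructor
      · intro hv
        by_contra hne
        exact bipartite_aux V₂ V₁ hne₁ (by rw [Set.union_comm]; exact hu) hd.symm
          (fun I J => (hadj I J).trans or_comm) (Set.not_infinite.mp hinf) v A hv hA hne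
      · intro h; rw [h]; exact hA
end
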